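/- The assignment Y_i ↦ Y_i^{−1} (i = 1,…,n−1) extends to an involutive R-algebra automorphism ω of the presented algebra 𝔄. -/

import Mathlib

/-- The integers `α^{(m)}_{k,l,l'}`, defined by the recursion
`α^{(0)}_{k,l,l'} = δ_{k,0}δ_{l,0}δ_{l',0}`,
`α^{(m+1)}_{k,l,l'} = α^{(m)}_{k-1,l',l} + α^{(m)}_{-k,l',l-1}`, with `α^{(m)}_{k,l,l'} = 0`
whenever `l < 0` or `l' < 0`. -/
def alternatingAlpha : ℕ → ℤ → ℤ → ℤ → ℤ
  | 0, k, l, l' => if k = 0 ∧ l = 0 ∧ l' = 0 then 1 else 0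
  | m + 1, k, l, l' =>
      if l < 0 ∨ l' < 0 then 0
      else alternatingAlpha m (k - 1) l' l + alternatingAlpha m (-k) l' (l - 1)

/-- The coefficient `a_k^{(m)}(β,β') = Σ_{l,l'≥0} β^l β'^{l'} (α^{(m)}_{k,l,l'} − α^{(m)}_{−k,l',l})`
(a finite sum). -/
noncomputable def aCoeff (R : Type*) [CommRing R] (m k : ℕ) (b b' : R) : R :=
  ∑ᶠ (l : ℕ) (l' : ℕ), b ^ l * b' ^ l' *
    ((alternatingAlpha m (k : ℤ) (l : ℤ) (l' : ℤ) -
      alternatingAlpha m (-(k : ℤ)) (l' : ℤ) (l : ℤ) : ℤ) : R)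

section Hecke
variable (n : ℕ) (M : CoxeterMatrix (Fin n)) (R : Type*) [CommRing R] (q : Fin n → Rˣ)

/-- The scalar `q_i - q_i⁻¹`. -/
def heckeC (i : Fin n) : R := (q i : R) - ((q i)⁻¹ : Rˣ)

/-- The scalar `β_i = (q_i - q_i⁻¹)(q_i + q_i⁻¹)⁻¹`. -/
noncomputable def heckeBeta (i : Fin n) : R :=
  heckeC n R q i * Ring.inverse ((q i : R) + ((q i)⁻¹ : Rˣ))

variable [NeZero n]

/-- Generators of the presented algebra `𝔄`: for each `i ≠ 0` a generator `Y_i = (i, true)`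
and a generator `Y_i⁻¹ = (i, false)`. -/
abbrev AltGen : Type _ := {i : Fin n // i ≠ 0} × Bool

/-- The defining relations of the presented algebra `𝔄` (Bourbaki presentation of the
alternating subalgebra): `Y_i Y_i⁻¹ = Y_i⁻¹ Y_i = 1`;
`Σ_k a_k^{(m_{0i})}(β_0,β_i)·(Y_i^{(m_{0i}+k)/2} − Y_i^{(m_{0i}−k)/2}) = 0` for `m_{0i}` finite;
and `Σ_k a_k^{(m_{ij})}(β_i,β_j)·((Y_i⁻¹Y_j)^{(m_{ij}+k)/2} − (Y_i⁻¹Y_j)^{(m_{ij}−k)/2}) = 0`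
for `i < j` with `m_{ij}` finite (sums over `1 ≤ k ≤ m`, `k ≡ m (mod 2)`;
the matrix entry `0` encodes `∞`, the relation being omitted). -/
inductive AltRel : FreeAlgebra R (AltGen n) → FreeAlgebra R (AltGen n) → Prop
  | inv_right (i : {i : Fin n // i ≠ 0}) :
      AltRel (FreeAlgebra.ι R (i, true) * FreeAlgebra.ι R (i, false)) 1
  | inv_left (i : {i : Fin n // i ≠ 0}) :
      AltRel (FreeAlgebra.ι R (i, false) * FreeAlgebra.ι R (i, true)) 1
  | rel_zero (i : {i : Fin n // i ≠ 0}) (h : M 0 i ≠ 0) :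
      AltRel (∑ k ∈ (Finset.Icc 1 (M 0 i)).filter (fun k => k % 2 = M 0 i % 2),
        aCoeff R (M 0 i) k (heckeBeta n R q 0) (heckeBeta n R q i) •
          ((FreeAlgebra.ι R (i, true)) ^ ((M 0 i + k) / 2) -
           (FreeAlgebra.ι R (i, true)) ^ ((M 0 i - k) / 2))) 0
  | rel_pair (i j : {i : Fin n // i ≠ 0}) (hij : (i : Fin n) < j) (h : M i j ≠ 0) :
      AltRel (∑ k ∈ (Finset.Icc 1 (M i j)).filter (fun k => k % 2 = M i j % 2),
        aCoeff R (M i j) k (heckeBeta n R q i) (heckeBeta n R q j) •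
          ((FreeAlgebra.ι R (i, false) * FreeAlgebra.ι R (j, true)) ^ ((M i j + k) / 2) -
           (FreeAlgebra.ι R (i, false) * FreeAlgebra.ι R (j, true)) ^ ((M i j - k) / 2))) 0

/-- The presented algebra `𝔄` (the Bourbaki presentation of the alternating subalgebra). -/
abbrev AltAlgebra : Type _ := RingQuot (AltRel n M R q)

end Hecke

section OmegaAux

lemma invPow_mul_pow {A : Type*} [Monoid A] {y v : A} (h2 : v * y = 1) (b : ℕ) :
    v ^ b * y ^ b = 1 := by
  induction b with
  | zero => simp
  | succ b ih =>
    rw [pow_succ, pow_succ', mul_assoc, ← mul_assoc v, h2, one_mul, ih]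

lemma invPow_mul_pow_le {A : Type*} [Monoid A] {y v : A} (h2 : v * y = 1)
    {a b : ℕ} (hba : b ≤ a) : v ^ a * y ^ b = v ^ (a - b) := by
  conv_lhs => rw [← Nat.sub_add_cancel hba, pow_add, mul_assoc, invPow_mul_pow h2, mul_one]

/-- If the relation `Σ_k c_k (y^{(m+k)/2} - y^{(m-k)/2}) = 0` holds and `v` is a two-sided
inverse of `y`, then the same relation with `y` replaced by `v` holds. -/
lemma sum_flip_eq_zero {R A : Type*} [CommRing R] [Ring A] [Algebra R A]
    {y v : A} (h2 : v * y = 1) (m : ℕ) (c : ℕ → R)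
    (hS : ∑ k ∈ (Finset.Icc 1 m).filter (fun k => k % 2 = m % 2),
        c k • (y ^ ((m + k) / 2) - y ^ ((m - k) / 2)) = 0) :
    ∑ k ∈ (Finset.Icc 1 m).filter (fun k => k % 2 = m % 2),
        c k • (v ^ ((m + k) / 2) - v ^ ((m - k) / 2)) = 0 := by
  have key : ∀ k ∈ (Finset.Icc 1 m).filter (fun k => k % 2 = m % 2),
      c k • (v ^ ((m + k) / 2) - v ^ ((m - k) / 2)) =
        -(v ^ m * (c k • (y ^ ((m + k) / 2) - y ^ ((m - k) / 2)))) := by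
    intro k hk
    simp only [Finset.mem_filter, Finset.mem_Icc] at hk
    obtain ⟨⟨hk1, hkm⟩, hkp⟩ := hk
    have ha : (m + k) / 2 ≤ m := by omega
    have hb : (m - k) / 2 ≤ m := by omega
    have e1 : v ^ m * y ^ ((m + k) / 2) = v ^ ((m - k) / 2) := by
      rw [invPow_mul_pow_le h2 ha]; congr 1; omega
    have e2 : v ^ m * y ^ ((m - k) / 2) = v ^ ((m + k) / 2) := by
      rw [invPow_mul_pow_le h2 hb]; congr 1; omega
    rw [mul_smul_comm, mul_sub, e1, e2, smul_sub, smul_sub, neg_sub]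
  calc ∑ k ∈ (Finset.Icc 1 m).filter (fun k => k % 2 = m % 2),
        c k • (v ^ ((m + k) / 2) - v ^ ((m - k) / 2))
      = ∑ k ∈ (Finset.Icc 1 m).filter (fun k => k % 2 = m % 2),
          -(v ^ m * (c k • (y ^ ((m + k) / 2) - y ^ ((m - k) / 2)))) :=
        Finset.sum_congr rfl key
    _ = -(v ^ m * ∑ k ∈ (Finset.Icc 1 m).filter (fun k => k % 2 = m % 2),
          c k • (y ^ ((m + k) / 2) - y ^ ((m - k) / 2))) := by
        rw [Finset.sum_neg_distrib, Finset.mul_sum]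
    _ = 0 := by rw [hS, mul_zero, neg_zero]

lemma conj_pow_eq {A : Type*} [Monoid A] {a d : A} (h : a * d = 1) (b : A) (p : ℕ) :
    (a * b) ^ p = a * (b * a) ^ p * d := by
  have hsc : SemiconjBy a (b * a) (a * b) := (mul_assoc a b a).symm
  rw [(hsc.pow_right p).eq, mul_assoc, h, mul_one]

variable (n : ℕ) [NeZero n] (M : CoxeterMatrix (Fin n)) (R : Type*) [CommRing R]
  (q : Fin n → Rˣ)

/-- The algebra homomorphism from the free algebra to `𝔄` sending each generator to
(the class of) the generator with flipped sign. -/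
noncomputable def altFlipHom : FreeAlgebra R (AltGen n) →ₐ[R] AltAlgebra n M R q :=
  FreeAlgebra.lift R fun g =>
    RingQuot.mkAlgHom R (AltRel n M R q) (FreeAlgebra.ι R (g.1, !g.2))

lemma altFlipHom_ι (g : AltGen n) :
    altFlipHom n M R q (FreeAlgebra.ι R g) =
      RingQuot.mkAlgHom R (AltRel n M R q) (FreeAlgebra.ι R (g.1, !g.2)) := by
  simp only [altFlipHom, FreeAlgebra.lift_ι_apply]

lemma altFlipHom_rel : ∀ ⦃x y : FreeAlgebra R (AltGen n)⦄, AltRel n M R q x y →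
    altFlipHom n M R q x = altFlipHom n M R q y := by
  set mk := RingQuot.mkAlgHom R (AltRel n M R q) with hmk
  have hinv1 : ∀ i : {i : Fin n // i ≠ 0},
      mk (FreeAlgebra.ι R (i, true)) * mk (FreeAlgebra.ι R (i, false)) = 1 := fun i => by
    rw [← map_mul, RingQuot.mkAlgHom_rel R (AltRel.inv_right i), map_one]
  have hinv2 : ∀ i : {i : Fin n // i ≠ 0},
      mk (FreeAlgebra.ι R (i, false)) * mk (FreeAlgebra.ι R (i, true)) = 1 := fun i => by
    rw [← map_mul, RingQuot.mkAlgHom_rel R (AltRel.inv_left i), map_one]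
  intro x y hxy
  induction hxy with
  | inv_right i =>
    rw [map_mul, map_one, altFlipHom_ι, altFlipHom_ι]
    exact hinv2 i
  | inv_left i =>
    rw [map_mul, map_one, altFlipHom_ι, altFlipHom_ι]
    exact hinv1 i
  | rel_zero i h =>
    rw [map_sum, map_zero]
    simp only [map_smul, map_sub, map_pow, altFlipHom_ι]
    apply sum_flip_eq_zero (hinv2 i)
    have := RingQuot.mkAlgHom_rel R (s := AltRel n M R q) (AltRel.rel_zero i h)
    rw [map_sum, map_zero] at this
    simpa only [map_smul, map_sub, map_pow] using this
  | rel_pair i j hij h =>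
    rw [map_sum, map_zero]
    simp only [map_smul, map_sub, map_pow, map_mul, altFlipHom_ι]
    -- notation
    set yi := mk (FreeAlgebra.ι R (i, true))
    set vi := mk (FreeAlgebra.ι R (i, false))
    set yj := mk (FreeAlgebra.ι R (j, true))
    set vj := mk (FreeAlgebra.ι R (j, false))
    have hz : ∑ k ∈ (Finset.Icc 1 (M i j)).filter (fun k => k % 2 = M i j % 2),
        aCoeff R (M i j) k (heckeBeta n R q i) (heckeBeta n R q j) •
          ((vi * yj) ^ ((M i j + k) / 2) - (vi * yj) ^ ((M i j - k) / 2)) = 0 := by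
      have := RingQuot.mkAlgHom_rel R (s := AltRel n M R q) (AltRel.rel_pair i j hij h)
      rw [map_sum, map_zero] at this
      simpa only [map_smul, map_sub, map_pow, map_mul] using this
    -- `u = vj * yi` is a two-sided inverse of `vi * yj`
    have hu : (vj * yi) * (vi * yj) = 1 := by
      rw [mul_assoc, ← mul_assoc yi, hinv1 i, one_mul, hinv2 j]
    have hu' : ∑ k ∈ (Finset.Icc 1 (M i j)).filter (fun k => k % 2 = M i j % 2),
        aCoeff R (M i j) k (heckeBeta n R q i) (heckeBeta n R q j) •
          ((vj * yi) ^ ((M i j + k) / 2) - (vj * yi) ^ ((M i j - k) / 2)) = 0 :=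
      sum_flip_eq_zero hu _ _ hz
    have hconj : ∀ p : ℕ, (yi * vj) ^ p = yi * (vj * yi) ^ p * vi :=
      fun p => conj_pow_eq (hinv1 i) vj p
    calc ∑ k ∈ (Finset.Icc 1 (M i j)).filter (fun k => k % 2 = M i j % 2),
          aCoeff R (M i j) k (heckeBeta n R q i) (heckeBeta n R q j) •
            ((yi * vj) ^ ((M i j + k) / 2) - (yi * vj) ^ ((M i j - k) / 2))
        = yi * (∑ k ∈ (Finset.Icc 1 (M i j)).filter (fun k => k % 2 = M i j % 2),
            aCoeff R (M i j) k (heckeBeta n R q i) (heckeBeta n R q j) •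
              ((vj * yi) ^ ((M i j + k) / 2) - (vj * yi) ^ ((M i j - k) / 2))) * vi := by
          rw [Finset.mul_sum, Finset.sum_mul]
          refine Finset.sum_congr rfl fun k _ => ?_
          rw [hconj, hconj]
          simp only [mul_sub, sub_mul, smul_sub, mul_smul_comm, smul_mul_assoc]
      _ = 0 := by rw [hu', mul_zero, zero_mul]

/-- The involution `ω` as an algebra endomorphism of `𝔄`. -/
noncomputable def altOmega : AltAlgebra n M R q →ₐ[R] AltAlgebra n M R q :=
  RingQuot.liftAlgHom R ⟨altFlipHom n M R q, altFlipHom_rel n M R q⟩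

lemma altOmega_mk (g : AltGen n) :
    altOmega n M R q (RingQuot.mkAlgHom R (AltRel n M R q) (FreeAlgebra.ι R g)) =
      RingQuot.mkAlgHom R (AltRel n M R q) (FreeAlgebra.ι R (g.1, !g.2)) := by
  rw [altOmega, RingQuot.liftAlgHom_mkAlgHom_apply, altFlipHom_ι]

lemma altOmega_comp :
    (altOmega n M R q).comp (altOmega n M R q) = AlgHom.id R (AltAlgebra n M R q) := by
  apply RingQuot.ringQuot_ext'
  apply FreeAlgebra.hom_ext
  funext g
  simp only [Function.comp_apply, AlgHom.coe_comp, AlgHom.coe_id, id_eq]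
  rw [altOmega_mk, altOmega_mk]
  simp

end OmegaAux

/-- The assignment `Y_i ↦ Y_i⁻¹` extends to an involutive `R`-algebra automorphism `ω` of
the presented algebra `𝔄`. -/
theorem omega_automorphism_of_alternating_hecke_subalgebra
    (n : ℕ) [NeZero n] (M : CoxeterMatrix (Fin n)) (R : Type*) [CommRing R]
    (q : Fin n → Rˣ)
    (hq : ∀ i, IsUnit ((q i : R) + ((q i)⁻¹ : Rˣ)))
    (hodd : ∀ i j, M i j % 2 = 1 → q i = q j) :
    ∃ ω : AltAlgebra n M R q ≃ₐ[R] AltAlgebra n M R q,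
      (∀ i : {i : Fin n // i ≠ 0},
        ω (RingQuot.mkAlgHom R (AltRel n M R q) (FreeAlgebra.ι R (i, true))) =
          RingQuot.mkAlgHom R (AltRel n M R q) (FreeAlgebra.ι R (i, false))) ∧
      (∀ x : AltAlgebra n M R q, ω (ω x) = x) := by
  refine ⟨AlgEquiv.ofAlgHom (altOmega n M R q) (altOmega n M R q)
    (altOmega_comp n M R q) (altOmega_comp n M R q), fun i => ?_, fun x => ?_⟩
  · exact altOmega_mk n M R q (i, true)
  · exact DFunLike.congr_fun (altOmega_comp n M R q) x
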